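/- Let R be a commutative Noetherian ring such that every finitely generated reflexive R-module is self-dual. Then a finitely generated R-module M is 3-torsionfree if and only if M is totally reflexive. -/

import Mathlib

open CategoryTheory

universe u

variable (R : Type u) [CommRing R]

/-- Vanishing of `Ext_R^i(M, N)`. -/
def ExtVanishes (M N : Type u) [AddCommGroup M] [Module R M] [AddCommGroup N] [Module R N]
    (i : ℕ) : Prop :=
  Subsingleton (((Ext R (ModuleCat.{u} R) i).obj (Opposite.op (ModuleCat.of R M))).obj
    (ModuleCat.of R N))

/-- `M` is self-dual: `M ≅ M^* = Hom_R(M, R)`. -/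
def IsSelfDual (M : Type u) [AddCommGroup M] [Module R M] : Prop :=
  Nonempty (M ≃ₗ[R] (M →ₗ[R] R))

/-- `M` is `n`-torsionfree: for some (equivalently, any) finite free presentation
`F₁ → F₀ → M → 0` given by a matrix `A`, the Auslander transpose `Tr M`, i.e. the
cokernel of the dualized map (given by the transposed matrix `Aᵀ`), satisfies
`Ext_R^i(Tr M, R) = 0` for `i = 1, …, n`. -/
def IsNTorsionfree (n : ℕ) (M : Type u) [AddCommGroup M] [Module R M] : Prop :=
  ∃ (p q : ℕ) (A : Matrix (Fin p) (Fin q) R),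
    Nonempty (M ≃ₗ[R] ((Fin p → R) ⧸ LinearMap.range (Matrix.toLin' A))) ∧
    ∀ i, 1 ≤ i → i ≤ n →
      ExtVanishes R ((Fin q → R) ⧸ LinearMap.range (Matrix.toLin' A.transpose)) R i

/-- `M` is totally reflexive (Gorenstein projective): `M` is reflexive and
`Ext_R^i(M, R) = Ext_R^i(M^*, R) = 0` for all `i > 0`. -/
def IsTotallyReflexive (M : Type u) [AddCommGroup M] [Module R M] : Prop :=
  Module.IsReflexive R M ∧ (∀ i, 0 < i → ExtVanishes R M R i) ∧
    (∀ i, 0 < i → ExtVanishes R (M →ₗ[R] R) R i)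

/-- `N` is a syzygy `Ω M` of `M`: the kernel of a surjection `P → M` with `P`
finitely generated projective. -/
def IsSyzygyOf (N M : Type u) [AddCommGroup N] [Module R N] [AddCommGroup M] [Module R M] :
    Prop :=
  ∃ (P : Type u) (_ : AddCommGroup P) (_ : Module R P) (g : P →ₗ[R] M),
    Module.Projective R P ∧ Module.Finite R P ∧ Function.Surjective g ∧
      Nonempty (N ≃ₗ[R] LinearMap.ker g)

/-- `N` is an `n`-th syzygy `Ωⁿ M` of `M`. -/
def IsNthSyzygyOf (n : ℕ) (N M : Type u) [AddCommGroup N] [Module R N]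
    [AddCommGroup M] [Module R M] : Prop :=
  match n with
  | 0 => Nonempty (N ≃ₗ[R] M)
  | n + 1 => ∃ (K : Type u) (_ : AddCommGroup K) (_ : Module R K),
      IsSyzygyOf R K M ∧ IsNthSyzygyOf n N K

/-- Every finitely generated reflexive `R`-module is self-dual (property (sd)). -/
def SDProperty : Prop :=
  ∀ (M : Type u) (_ : AddCommGroup M) (_ : Module R M),
    Module.Finite R M → Module.IsReflexive R M → IsSelfDual R M

/-- The depth of a Noetherian local ring is at least `t`: there is an `R`-regular
sequence of length `t` inside the maximal ideal. -/
def DepthGE [IsLocalRing R] (t : ℕ) : Prop :=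
  ∃ rs : List R, rs.length = t ∧ (∀ r ∈ rs, r ∈ IsLocalRing.maximalIdeal R) ∧
    RingTheory.Sequence.IsRegular R rs

/-- The depth of a Noetherian local ring is at most `t`: every `R`-regular sequence
inside the maximal ideal has length at most `t`. -/
def DepthLE [IsLocalRing R] (t : ℕ) : Prop :=
  ∀ rs : List R, (∀ r ∈ rs, r ∈ IsLocalRing.maximalIdeal R) →
    RingTheory.Sequence.IsRegular R rs → rs.length ≤ t

/-- A local ring is Gorenstein if it has finite injective dimension over itself,
equivalently there is `n` such that `Ext_R^i(N, R) = 0` for all modules `N` and all `i > n`. -/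
def IsGorensteinLocalRing : Prop :=
  ∃ n : ℕ, ∀ (N : Type u) (_ : AddCommGroup N) (_ : Module R N), ∀ i, n < i →
    ExtVanishes R N R i

set_option linter.unusedSectionVars false

section Infra

variable {R}

lemma subsingleton_of_isZero {X : ModuleCat.{u} R} (h : Limits.IsZero X) : Subsingleton X := by
  refine ⟨fun a b => ?_⟩
  have h1 : (𝟙 X : X ⟶ X) = 0 := h.eq_of_src _ _
  have : ∀ x : X, (𝟙 X : X ⟶ X) x = (0 : X ⟶ X) x := fun x => by rw [h1]
  simpa using (this a).trans (this b).symm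

lemma extVanishes_congr {M M' N : Type u} [AddCommGroup M] [Module R M]
    [AddCommGroup M'] [Module R M'] [AddCommGroup N] [Module R N]
    (e : M ≃ₗ[R] M') (i : ℕ) : ExtVanishes R M N i ↔ ExtVanishes R M' N i := by
  have eIso : ModuleCat.of R M ≅ ModuleCat.of R M' :=
    { hom := ModuleCat.ofHom (e : M →ₗ[R] M'), inv := ModuleCat.ofHom (e.symm : M' →ₗ[R] M),
      hom_inv_id := by ext x; exact e.symm_apply_apply x
      inv_hom_id := by ext x; exact e.apply_symm_apply x }
  have big : (((Ext R (ModuleCat.{u} R) i).obj (Opposite.op (ModuleCat.of R M))).obj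
      (ModuleCat.of R N)) ≅ (((Ext R (ModuleCat.{u} R) i).obj
      (Opposite.op (ModuleCat.of R M'))).obj (ModuleCat.of R N)) :=
    ((Ext R (ModuleCat.{u} R) i).mapIso (Iso.op eIso.symm)).app (ModuleCat.of R N)
  constructor
  · intro h
    exact subsingleton_of_isZero (Limits.IsZero.of_iso (@ModuleCat.isZero_of_subsingleton _ _ _ h) big.symm)
  · intro h
    exact subsingleton_of_isZero (Limits.IsZero.of_iso (@ModuleCat.isZero_of_subsingleton _ _ _ h) big)

end Infra

/-- A resolution of `M` by projective modules. -/
structure FRes (M : Type u) [AddCommGroup M] [Module R M] where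
  F : ℕ → ModuleCat.{u} R
  proj : ∀ n, Projective (F n)
  d : ∀ n, F (n + 1) →ₗ[R] F n
  π : F 0 →ₗ[R] M
  surj : Function.Surjective π
  exact0 : LinearMap.range (d 0) = LinearMap.ker π
  exact : ∀ n, LinearMap.range (d (n + 1)) = LinearMap.ker (d n)

namespace FRes

variable {R} {M : Type u} [AddCommGroup M] [Module R M] (res : FRes R M)

lemma d_comp_d (n : ℕ) : (res.d n).comp (res.d (n + 1)) = 0 := by
  ext x
  have : res.d (n+1) x ∈ LinearMap.ker (res.d n) := by
    rw [← res.exact n]; exact ⟨x, rfl⟩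
  simpa using this

lemma π_comp_d : res.π.comp (res.d 0) = 0 := by
  ext x
  have : res.d 0 x ∈ LinearMap.ker res.π := by
    rw [← res.exact0]; exact ⟨x, rfl⟩
  simpa using this

/-- The chain complex associated to a resolution. -/
noncomputable def complex : ChainComplex (ModuleCat.{u} R) ℕ :=
  ChainComplex.of res.F (fun n => (ModuleCat.ofHom (res.d n) : res.F (n+1) ⟶ res.F n))
    (fun n => by
      apply ModuleCat.hom_ext
      exact res.d_comp_d n)

@[simp] lemma complex_X (n : ℕ) : res.complex.X n = res.F n := rfl

lemma complex_d (n : ℕ) : res.complex.d (n+1) n = (ModuleCat.ofHom (res.d n) : res.F (n+1) ⟶ res.F n) :=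
  by simp [complex]

/-- The augmentation chain map to the single complex. -/
noncomputable def augment : res.complex ⟶ (ChainComplex.single₀ (ModuleCat.{u} R)).obj (ModuleCat.of R M) :=
  (res.complex.toSingle₀Equiv (ModuleCat.of R M)).symm
    ⟨(ModuleCat.ofHom res.π : res.F 0 ⟶ ModuleCat.of R M), by
      rw [res.complex_d 0]; apply ModuleCat.hom_ext; exact res.π_comp_d⟩

lemma augment_f_zero : res.augment.f 0 = (ModuleCat.ofHom res.π : res.F 0 ⟶ ModuleCat.of R M) :=
  ChainComplex.toSingle₀Equiv_symm_apply_f_zero _ _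

/-- The associated projective resolution. -/
noncomputable def toProjRes : ProjectiveResolution (ModuleCat.of R M) where
  complex := res.complex
  projective n := res.proj n
  π := res.augment
  quasiIso := ⟨fun n => by
    cases n with
    | zero =>
      rw [ChainComplex.quasiIsoAt₀_iff, ShortComplex.quasiIso_iff_of_zeros']
      rotate_left
      · rfl
      · rfl
      · rfl
      constructor
      · rw [ShortComplex.moduleCat_exact_iff]
        intro x hx
        have hx' : res.augment.f 0 x = 0 := hx
        rw [res.augment_f_zero] at hx'
        have : x ∈ LinearMap.range (res.d 0) := by rw [res.exact0]; exact hx'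
        obtain ⟨y, hy⟩ := this
        refine ⟨y, ?_⟩
        show res.complex.d 1 0 y = x
        rw [res.complex_d 0]
        exact hy
      · have : Epi (res.augment.f 0) := by
          rw [res.augment_f_zero]
          exact (ModuleCat.epi_iff_surjective _).2 res.surj
        exact this
    | succ n =>
      rw [quasiIsoAt_iff_exactAt' _ _ (ChainComplex.exactAt_succ_single_obj _ _)]
      rw [HomologicalComplex.exactAt_iff' _ (n+2) (n+1) n (by simp) (by simp)]
      rw [ShortComplex.moduleCat_exact_iff_range_eq_ker]
      show LinearMap.range (res.complex.d (n+2) (n+1)).hom = LinearMap.ker (res.complex.d (n+1) n).hom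
      rw [res.complex_d, res.complex_d]
      exact res.exact n⟩

end FRes

section Bridge

variable {R} {M : Type u} [AddCommGroup M] [Module R M]

lemma subsingleton_iff_of_iso {X Y : ModuleCat.{u} R} (e : X ≅ Y) :
    Subsingleton X ↔ Subsingleton Y :=
  ⟨fun h => subsingleton_of_isZero (Limits.IsZero.of_iso (@ModuleCat.isZero_of_subsingleton _ _ _ h) e.symm),
   fun h => subsingleton_of_isZero (Limits.IsZero.of_iso (@ModuleCat.isZero_of_subsingleton _ _ _ h) e)⟩

/-- The key bridge: `Ext^{i+1}(M, R)` vanishes iff functionals lift along the resolution. -/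
theorem FRes.extVanishes_iff (res : FRes R M) (i : ℕ) :
    ExtVanishes R M R (i + 1) ↔
      ∀ f : res.F (i + 1) →ₗ[R] R, f.comp (res.d (i + 1)) = 0 →
        ∃ g : res.F i →ₗ[R] R, g.comp (res.d i) = f := by
  rw [show ExtVanishes R M R (i+1) = Subsingleton (((Ext R (ModuleCat.{u} R) (i+1)).obj
      (Opposite.op (ModuleCat.of R M))).obj (ModuleCat.of R R)) from rfl]
  rw [subsingleton_iff_of_iso (res.toProjRes.isoExt (i+1) (ModuleCat.of R R))]
  set K := (res.toProjRes.complex.linearYonedaObj R (ModuleCat.of R R)) with hK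
  have hiff : Subsingleton (K.homology (i+1)) ↔ (K.sc' i (i+1) (i+2)).Exact := by
    rw [← HomologicalComplex.exactAt_iff' K i (i+1) (i+2) (by simp) (by simp),
      HomologicalComplex.exactAt_iff_isZero_homology]
    exact ⟨fun h => @ModuleCat.isZero_of_subsingleton _ _ _ h, fun h => subsingleton_of_isZero h⟩
  rw [hiff, ShortComplex.moduleCat_exact_iff]
  have hd : ∀ (a : ℕ) (g : res.complex.X a ⟶ ModuleCat.of R R),
      (K.d a (a+1)) g = res.complex.d (a+1) a ≫ g := by
    intro a g
    show ((res.toProjRes.complex.linearYonedaObj R (ModuleCat.of R R)).d a (a+1)) g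
      = res.complex.d (a+1) a ≫ g
    rw [ChainComplex.linearYonedaObj_d]
    rfl
  constructor
  · intro h f hf
    obtain ⟨g, hg⟩ := h (ModuleCat.ofHom f : res.complex.X (i+1) ⟶ ModuleCat.of R R) (by
      show (K.d (i+1) (i+2)) _ = 0
      refine (hd (i+1) _).trans ?_
      rw [res.complex_d (i+1)]
      apply ModuleCat.hom_ext
      exact hf)
    refine ⟨g.hom, ?_⟩
    have : (K.d i (i+1)) g = (ModuleCat.ofHom f : res.complex.X (i+1) ⟶ ModuleCat.of R R) := hg
    replace this := (hd i g).symm.trans this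
    rw [res.complex_d i] at this
    exact congrArg ModuleCat.Hom.hom this
  · intro h f hf
    have hf' : (f : res.complex.X (i+1) ⟶ ModuleCat.of R R).hom.comp (res.d (i+1)) = 0 := by
      have : res.complex.d (i+1+1) (i+1) ≫ (f : res.complex.X (i+1) ⟶ ModuleCat.of R R) = 0 :=
        (hd (i+1) f).symm.trans hf
      rw [res.complex_d (i+1)] at this
      exact congrArg ModuleCat.Hom.hom this
    obtain ⟨g, hg⟩ := h _ hf'
    refine ⟨ModuleCat.ofHom g, ?_⟩
    show (K.d i (i+1)) (ModuleCat.ofHom g) = f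
    refine (hd i _).trans ?_
    rw [res.complex_d i]
    apply ModuleCat.hom_ext
    exact hg

end Bridge

section Constructions

variable {R}

lemma projective_pi (k : ℕ) : Projective (ModuleCat.of R (Fin k → R)) :=
  ModuleCat.projective_of_free (Pi.basisFun R (Fin k))

variable [IsNoetherianRing R]

/-- pick a finite free cover of a submodule of a finite free module -/
noncomputable def pickCover (k : ℕ) (S : Submodule R (Fin k → R)) :
    Σ' (k' : ℕ) (f : (Fin k' → R) →ₗ[R] (Fin k → R)), LinearMap.range f = S := by
  have : Module.Finite R S := by
    have : S.FG := IsNoetherian.noetherian S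
    exact Module.Finite.iff_fg.2 this
  have h := Module.Finite.exists_fin' R S
  refine ⟨h.choose, S.subtype.comp h.choose_spec.choose, ?_⟩
  have hs := h.choose_spec.choose_spec
  rw [LinearMap.range_comp, LinearMap.range_eq_top.2 hs, Submodule.map_top,
    Submodule.range_subtype]

variable (M : Type u) [AddCommGroup M] [Module R M] [Module.Finite R M]

noncomputable def resChain : (k : ℕ) → (f : (Fin k → R) →ₗ[R] M) → ℕ → Σ (k' : ℕ), Submodule R (Fin k' → R)
  | k, f, 0 => ⟨k, LinearMap.ker f⟩
  | k, f, (n+1) =>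
      ⟨(pickCover (resChain k f n).1 (resChain k f n).2).1,
        LinearMap.ker (pickCover (resChain k f n).1 (resChain k f n).2).2.1⟩

/-- Every finitely generated module over a Noetherian ring has a free resolution. -/
noncomputable def freeRes : FRes R M := by
  have h := Module.Finite.exists_fin' R M
  set k := h.choose with hk
  set f := h.choose_spec.choose with hfdef
  have hf : Function.Surjective f := h.choose_spec.choose_spec
  exact
  { F := fun n => ModuleCat.of R (Fin (resChain M k f n).1 → R)
    proj := fun n => projective_pi _
    d := fun n => (pickCover (resChain M k f n).1 (resChain M k f n).2).2.1
    π := f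
    surj := hf
    exact0 := (pickCover (resChain M k f 0).1 (resChain M k f 0).2).2.2
    exact := fun n => by
      have h1 : LinearMap.range (pickCover (resChain M k f (n+1)).1 (resChain M k f (n+1)).2).2.1
          = (resChain M k f (n+1)).2 :=
        (pickCover (resChain M k f (n+1)).1 (resChain M k f (n+1)).2).2.2
      exact h1 }

end Constructions

section MoreInfra

variable {R}

/-- Factor a linear map through a surjection whose kernel it kills. -/
lemma factor_through {A B C' : Type u} [AddCommGroup A] [Module R A] [AddCommGroup B]
    [Module R B] [AddCommGroup C'] [Module R C'] (p : A →ₗ[R] B) (hp : Function.Surjective p)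
    (f : A →ₗ[R] C') (h : LinearMap.ker p ≤ LinearMap.ker f) :
    ∃ g : B →ₗ[R] C', g.comp p = f := by
  refine ⟨((LinearMap.ker p).liftQ f h).comp
    (LinearMap.quotKerEquivOfSurjective p hp).symm.toLinearMap, ?_⟩
  ext a
  have h1 : (LinearMap.quotKerEquivOfSurjective p hp).symm (p a) = Submodule.Quotient.mk a := by
    rw [LinearEquiv.symm_apply_eq]
    simp [LinearMap.quotKerEquivOfSurjective]
  simp only [LinearMap.coe_comp, Function.comp_apply, LinearEquiv.coe_coe, h1]
  exact Submodule.liftQ_apply _ f a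

variable [IsNoetherianRing R]

lemma finite_dual (X : Type u) [AddCommGroup X] [Module R X] [Module.Finite R X] :
    Module.Finite R (X →ₗ[R] R) := by
  obtain ⟨k, f, hf⟩ := Module.Finite.exists_fin' R X
  have : IsNoetherian R ((Fin k → R) →ₗ[R] R) :=
    isNoetherian_of_linearEquiv (Pi.basisFun R (Fin k)).toDualEquiv
  exact Module.Finite.of_injective f.dualMap (LinearMap.dualMap_injective_of_surjective hf)

end MoreInfra

namespace FRes

variable {R}

/-- Splice a projective cover with a resolution of the kernel. -/
noncomputable def cons {X W : Type u} [AddCommGroup X] [Module R X] [AddCommGroup W] [Module R W]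
    (P : ModuleCat.{u} R) (hproj : Projective P) (p : P →ₗ[R] X) (hp : Function.Surjective p)
    (u : W →ₗ[R] P) (hu : Function.Injective u) (hrange : LinearMap.range u = LinearMap.ker p)
    (H : FRes R W) : FRes R X where
  F := fun n => match n with
    | 0 => P
    | (n+1) => H.F n
  proj := fun n => match n with
    | 0 => hproj
    | (n+1) => H.proj n
  d := fun n => match n with
    | 0 => u.comp H.π
    | (n+1) => H.d n
  π := p
  surj := hp
  exact0 := by
    show LinearMap.range (u.comp H.π) = LinearMap.ker p
    rw [LinearMap.range_comp, LinearMap.range_eq_top.2 H.surj, Submodule.map_top]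
    exact hrange
  exact := fun n => match n with
    | 0 => by
        show LinearMap.range (H.d 0) = LinearMap.ker (u.comp H.π)
        rw [LinearMap.ker_comp, LinearMap.ker_eq_bot.2 hu]
        have : Submodule.comap H.π (⊥ : Submodule R W) = LinearMap.ker H.π := rfl
        rw [this, H.exact0]
    | (n+1) => H.exact n

end FRes

section TrSetup

variable {R}
variable (p q : ℕ) (A : Matrix (Fin p) (Fin q) R)

/-- The cokernel of the matrix `A`. -/
abbrev M0 : Type u := (Fin p → R) ⧸ LinearMap.range (Matrix.toLin' A)

/-- The Auslander transpose as a quotient of the dual module. -/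
abbrev T0 : Type u := Module.Dual R (Fin q → R) ⧸ LinearMap.range ((Matrix.toLin' A).dualMap)

noncomputable abbrev pi0 : (Fin p → R) →ₗ[R] M0 p q A :=
  Submodule.mkQ (LinearMap.range (Matrix.toLin' A))

lemma pi0_surj : Function.Surjective (pi0 p q A) := Submodule.mkQ_surjective _

lemma pi0_comp : (pi0 p q A).comp (Matrix.toLin' A) = 0 := by
  apply LinearMap.ext; intro x
  show Submodule.mkQ _ (Matrix.toLin' A x) = 0
  rw [Submodule.mkQ_apply]
  exact (Submodule.Quotient.mk_eq_zero _).2 ⟨x, rfl⟩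

lemma projective_dual_pi (k : ℕ) : Projective (ModuleCat.of R (Module.Dual R (Fin k → R))) :=
  ModuleCat.projective_of_free ((Pi.basisFun R (Fin k)).dualBasis)

lemma range_dualMap_pi0 :
    LinearMap.range ((pi0 p q A).dualMap) = LinearMap.ker ((Matrix.toLin' A).dualMap) := by
  apply le_antisymm
  · rintro _ ⟨h, rfl⟩
    show (h.comp (pi0 p q A)).comp (Matrix.toLin' A) = 0
    rw [LinearMap.comp_assoc, pi0_comp, LinearMap.comp_zero]
  · intro f hf
    have hker : LinearMap.ker (pi0 p q A) ≤ LinearMap.ker f := by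
      intro x hx
      rw [LinearMap.mem_ker] at hx ⊢
      have hx' : x ∈ LinearMap.range (Matrix.toLin' A) :=
        (Submodule.Quotient.mk_eq_zero _).1 hx
      obtain ⟨y, rfl⟩ := hx'
      have : ((Matrix.toLin' A).dualMap f) y = 0 := by
        rw [LinearMap.mem_ker] at hf; rw [hf]; rfl
      exact this
    obtain ⟨g, hg⟩ := factor_through (pi0 p q A) (pi0_surj p q A) f hker
    exact ⟨g, hg⟩

variable (H : FRes R (Module.Dual R (M0 p q A)))

/-- The resolution of the transpose, spliced from the presentation and a resolution
of the dual. -/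
noncomputable abbrev resT : FRes R (T0 p q A) where
  F := fun n => match n with
    | 0 => ModuleCat.of R (Module.Dual R (Fin q → R))
    | 1 => ModuleCat.of R (Module.Dual R (Fin p → R))
    | (n+2) => H.F n
  proj := fun n => match n with
    | 0 => projective_dual_pi q
    | 1 => projective_dual_pi p
    | (n+2) => H.proj n
  d := fun n => match n with
    | 0 => (Matrix.toLin' A).dualMap
    | 1 => ((pi0 p q A).dualMap).comp H.π
    | (n+2) => H.d n
  π := Submodule.mkQ _
  surj := Submodule.mkQ_surjective _
  exact0 := (Submodule.ker_mkQ _).symm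
  exact := fun n => match n with
    | 0 => by
        show LinearMap.range (((pi0 p q A).dualMap).comp H.π)
          = LinearMap.ker ((Matrix.toLin' A).dualMap)
        rw [LinearMap.range_comp, LinearMap.range_eq_top.2 H.surj, Submodule.map_top]
        exact range_dualMap_pi0 p q A
    | 1 => by
        show LinearMap.range (H.d 0) = LinearMap.ker (((pi0 p q A).dualMap).comp H.π)
        rw [LinearMap.ker_comp, LinearMap.ker_eq_bot.2
          (LinearMap.dualMap_injective_of_surjective (pi0_surj p q A))]
        have : Submodule.comap H.π (⊥ : Submodule R (Module.Dual R (M0 p q A)))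
            = LinearMap.ker H.π := rfl
        rw [this, H.exact0]
    | (n+2) => H.exact n

end TrSetup

section TrLemmas

variable {R}
variable (p q : ℕ) (A : Matrix (Fin p) (Fin q) R) (H : FRes R (Module.Dual R (M0 p q A)))

lemma proj_sep {k : ℕ} (x y : Fin k → R)
    (h : ∀ φ : Module.Dual R (Fin k → R), φ x = φ y) : x = y := by
  funext j
  exact h (LinearMap.proj j)

include H

lemma extVanishes_T0_one_iff :
    ExtVanishes R (T0 p q A) R 1 ↔ Function.Injective (Module.Dual.eval R (M0 p q A)) := by
  rw [(resT p q A H).extVanishes_iff 0]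
  constructor
  · intro h
    rw [injective_iff_map_eq_zero]
    intro m hm
    obtain ⟨x, rfl⟩ := pi0_surj p q A m
    have hf : (Module.Dual.eval R (Fin p → R) x).comp ((resT p q A H).d 1) = 0 := by
      apply LinearMap.ext; intro w
      show (H.π w) (pi0 p q A x) = 0
      have h1 := DFunLike.congr_fun hm (H.π w)
      simpa using h1
    obtain ⟨g, hg⟩ := h _ hf
    obtain ⟨y, rfl⟩ := (Module.bijective_dual_eval R (Fin q → R)).2 g
    have hxy : Matrix.toLin' A y = x := by
      refine proj_sep _ _ fun φ => ?_
      have := DFunLike.congr_fun hg φ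
      simpa using this
    show Submodule.mkQ _ x = 0
    rw [Submodule.mkQ_apply]
    exact (Submodule.Quotient.mk_eq_zero _).2 ⟨y, hxy⟩
  · intro hinj f hf
    obtain ⟨x, rfl⟩ := (Module.bijective_dual_eval R (Fin p → R)).2 f
    have hx : pi0 p q A x = 0 := by
      apply hinj
      rw [map_zero]
      apply LinearMap.ext; intro φ
      obtain ⟨w, rfl⟩ := H.surj φ
      have := DFunLike.congr_fun hf w
      simpa using this
    obtain ⟨y, hy⟩ := (Submodule.Quotient.mk_eq_zero _).1 hx
    refine ⟨Module.Dual.eval R (Fin q → R) y, ?_⟩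
    apply LinearMap.ext; intro k
    show Module.Dual.eval R (Fin p → R) (Matrix.toLin' A y) k
      = Module.Dual.eval R (Fin p → R) x k
    rw [hy]

lemma extVanishes_T0_two_iff :
    ExtVanishes R (T0 p q A) R 2 ↔ Function.Surjective (Module.Dual.eval R (M0 p q A)) := by
  rw [(resT p q A H).extVanishes_iff 1]
  constructor
  · intro h ψ
    have hf : (ψ.comp H.π).comp ((resT p q A H).d 2) = 0 := by
      apply LinearMap.ext; intro w
      show ψ (H.π (H.d 0 w)) = 0
      have : H.π (H.d 0 w) = 0 := by
        have := DFunLike.congr_fun H.π_comp_d w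
        simpa using this
      rw [this, map_zero]
    obtain ⟨g, hg⟩ := h _ hf
    obtain ⟨x, rfl⟩ := (Module.bijective_dual_eval R (Fin p → R)).2 g
    refine ⟨pi0 p q A x, ?_⟩
    apply LinearMap.ext; intro φ
    obtain ⟨w, rfl⟩ := H.surj φ
    exact DFunLike.congr_fun hg w
  · intro hs f hf
    have hker : LinearMap.ker H.π ≤ LinearMap.ker f := by
      intro w hw
      have hw' : w ∈ LinearMap.range (H.d 0) := by rw [H.exact0]; exact hw
      obtain ⟨v, rfl⟩ := hw'
      have := DFunLike.congr_fun hf v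
      simpa using this
    obtain ⟨ψ, hψ⟩ := factor_through H.π H.surj f hker
    obtain ⟨m, hm⟩ := hs ψ
    obtain ⟨x, rfl⟩ := pi0_surj p q A m
    refine ⟨Module.Dual.eval R (Fin p → R) x, ?_⟩
    apply LinearMap.ext; intro w
    show (H.π w) (pi0 p q A x) = f w
    have h1 : (H.π w) (pi0 p q A x) = ψ (H.π w) := by
      have := DFunLike.congr_fun hm (H.π w)
      simpa using this
    rw [h1, ← hψ]
    rfl

lemma extVanishes_T0_succ_iff (i : ℕ) :
    ExtVanishes R (T0 p q A) R (i + 3) ↔ ExtVanishes R (Module.Dual R (M0 p q A)) R (i + 1) := by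
  rw [(resT p q A H).extVanishes_iff (i + 2), H.extVanishes_iff i]

end TrLemmas

section Core

variable {R} [IsNoetherianRing R]

/-- Base case: a reflexive f.g. module with vanishing `Ext^1` of its dual has
vanishing `Ext^1`, by self-duality. -/
lemma base_case (hsd : SDProperty R) (X : Type u) [AddCommGroup X] [Module R X]
    [Module.Finite R X] [Module.IsReflexive R X]
    (hdual : ExtVanishes R (X →ₗ[R] R) R 1) : ExtVanishes R X R 1 := by
  obtain ⟨e⟩ := hsd X _ _ ‹_› ‹_›
  exact (extVanishes_congr e 1).2 hdual

lemma step_case (hsd : SDProperty R) (X : Type u) [AddCommGroup X] [Module R X]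
    [Module.Finite R X] [Module.IsReflexive R X]
    (hdual : ExtVanishes R (X →ₗ[R] R) R 1) (j : ℕ)
    (IH : ∀ (Y : Type u) (_ : AddCommGroup Y) (_ : Module R Y),
      Module.Finite R Y → Module.IsReflexive R Y → ExtVanishes R (Y →ₗ[R] R) R 1 →
      ExtVanishes R Y R (j + 1)) :
    ExtVanishes R X R (j + 2) := by
  classical
  obtain ⟨k, f, hf⟩ := Module.Finite.exists_fin' R X
  set K : Submodule R (Fin k → R) := LinearMap.ker f with hK
  have : Module.Finite R K := Module.Finite.iff_fg.2 (IsNoetherian.noetherian K)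
  set resK : FRes R K := freeRes K with hresK
  set resX : FRes R X := FRes.cons (ModuleCat.of R (Fin k → R)) (projective_pi k) f hf
    K.subtype K.injective_subtype (Submodule.range_subtype K) resK with hresX
  -- the restriction map on duals is surjective, thanks to `Ext^1(X, R) = 0`
  have hX1 : ExtVanishes R X R 1 := base_case hsd X hdual
  have rsurj : Function.Surjective (K.subtype.dualMap) := by
    rw [resX.extVanishes_iff 0] at hX1
    intro φ
    have h0 : (φ.comp resK.π).comp (resX.d 1) = 0 := by
      apply LinearMap.ext; intro w
      show φ (resK.π (resK.d 0 w)) = 0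
      have : resK.π (resK.d 0 w) = 0 := by
        have := DFunLike.congr_fun resK.π_comp_d w
        exact this
      rw [this, map_zero]
    obtain ⟨g, hg⟩ := hX1 _ h0
    refine ⟨g, ?_⟩
    apply LinearMap.ext; intro v
    obtain ⟨w, rfl⟩ := resK.surj v
    exact DFunLike.congr_fun hg w
  -- K is reflexive
  have hKinj : Function.Injective (Module.Dual.eval R K) := by
    rw [injective_iff_map_eq_zero]
    intro v hv
    ext j'
    have := DFunLike.congr_fun hv ((LinearMap.proj j').comp K.subtype)
    simpa using this
  have hKsurj : Function.Surjective (Module.Dual.eval R K) := by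
    intro Φ
    obtain ⟨x, hx⟩ := (Module.bijective_dual_eval R (Fin k → R)).2 (Φ.comp K.subtype.dualMap)
    have hxK : x ∈ K := by
      have hfx : ∀ h : Module.Dual R X, h (f x) = 0 := by
        intro h
        have h1 : K.subtype.dualMap (h.comp f) = 0 := by
          apply LinearMap.ext; intro v
          show h (f (K.subtype v)) = 0
          have : f (K.subtype v) = 0 := v.2
          rw [this, map_zero]
        have h2 : (h.comp f) x = Φ (K.subtype.dualMap (h.comp f)) :=
          DFunLike.congr_fun hx (h.comp f)
        rw [h1, map_zero] at h2
        exact h2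
      have : Module.Dual.eval R X (f x) = 0 := LinearMap.ext fun h => hfx h
      have := (Module.bijective_dual_eval R X).1 (by rw [this, map_zero] : Module.Dual.eval R X (f x) = Module.Dual.eval R X 0)
      exact this
    refine ⟨⟨x, hxK⟩, ?_⟩
    apply LinearMap.ext; intro φ
    obtain ⟨g, rfl⟩ := rsurj φ
    show g x = Φ (K.subtype.dualMap g)
    exact DFunLike.congr_fun hx g
  have hKrefl : Module.IsReflexive R K := ⟨⟨hKinj, hKsurj⟩⟩
  -- Ext^1 of the dual of K vanishes
  have : Module.Finite R (Module.Dual R X) := finite_dual X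
  set resW : FRes R (Module.Dual R X) := freeRes _ with hresW
  have hrange : LinearMap.range f.dualMap = LinearMap.ker (K.subtype.dualMap) := by
    apply le_antisymm
    · rintro _ ⟨h, rfl⟩
      apply LinearMap.ext; intro v
      show h (f (K.subtype v)) = 0
      have : f (K.subtype v) = 0 := v.2
      rw [this, map_zero]
    · intro g hg
      have hker : LinearMap.ker f ≤ LinearMap.ker g := by
        intro x hx
        have := DFunLike.congr_fun hg ⟨x, hx⟩
        exact this
      obtain ⟨h, hh⟩ := factor_through f hf g hker
      exact ⟨h, hh⟩
  set resDK : FRes R (Module.Dual R K) := FRes.cons (ModuleCat.of R (Module.Dual R (Fin k → R)))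
    (projective_dual_pi k) K.subtype.dualMap rsurj f.dualMap
    (LinearMap.dualMap_injective_of_surjective hf) hrange resW with hresDK
  have hDK1 : ExtVanishes R (Module.Dual R K) R 1 := by
    rw [resDK.extVanishes_iff 0]
    intro f1 hf1
    have hker : LinearMap.ker resW.π ≤ LinearMap.ker f1 := by
      intro w hw
      have hw' : w ∈ LinearMap.range (resW.d 0) := by rw [resW.exact0]; exact hw
      obtain ⟨v, rfl⟩ := hw'
      exact DFunLike.congr_fun hf1 v
    obtain ⟨ψ, hψ⟩ := factor_through resW.π resW.surj f1 hker
    obtain ⟨xbar, hxbar⟩ := (Module.bijective_dual_eval R X).2 ψ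
    obtain ⟨x0, rfl⟩ := hf xbar
    refine ⟨Module.Dual.eval R (Fin k → R) x0, ?_⟩
    apply LinearMap.ext; intro w
    show (resW.π w) (f x0) = f1 w
    rw [← hψ]
    have := DFunLike.congr_fun hxbar (resW.π w)
    exact this
  -- conclude by the inductive hypothesis and dimension shifting
  have hKj : ExtVanishes R K R (j + 1) := IH K _ _ ‹_› hKrefl hDK1
  rw [resX.extVanishes_iff (j + 1)]
  rw [resK.extVanishes_iff j] at hKj
  exact hKj

end Core

section Transpose

variable {R}
variable (p q : ℕ) (A : Matrix (Fin p) (Fin q) R)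

lemma piRing_dualMap (φ : Module.Dual R (Fin p → R)) :
    LinearEquiv.piRing R R (Fin q) R ((Matrix.toLin' A).dualMap φ)
      = Matrix.toLin' A.transpose (LinearEquiv.piRing R R (Fin p) R φ) := by
  funext j
  have hL : LinearEquiv.piRing R R (Fin q) R ((Matrix.toLin' A).dualMap φ) j
      = φ (Matrix.toLin' A (Pi.single j 1)) := by
    rw [LinearEquiv.piRing_apply]; rfl
  have hR : Matrix.toLin' A.transpose (LinearEquiv.piRing R R (Fin p) R φ) j
      = ∑ i, A i j * φ (Pi.single i 1) := by
    rw [Matrix.toLin'_apply]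
    show ∑ i, A.transpose j i * (LinearEquiv.piRing R R (Fin p) R φ) i = _
    refine Finset.sum_congr rfl fun i _ => ?_
    rw [Matrix.transpose_apply, LinearEquiv.piRing_apply]
  rw [hL, hR]
  have hsingle : Matrix.toLin' A (Pi.single j 1) = fun i => A i j := by
    rw [Matrix.toLin'_apply, Matrix.mulVec_single]
    funext i; simp
  rw [hsingle]
  have hsum : (fun i => A i j) = ∑ i, A i j • Pi.single (M := fun _ => R) i (1 : R) := by
    funext l
    rw [Finset.sum_apply]
    simp [Pi.single_apply]
  rw [hsum, map_sum]
  refine Finset.sum_congr rfl fun i _ => ?_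
  rw [map_smul, smul_eq_mul]

/-- The statement's transpose module is isomorphic to `T0`. -/
noncomputable def transposeEquiv :
    T0 p q A ≃ₗ[R] ((Fin q → R) ⧸ LinearMap.range (Matrix.toLin' A.transpose)) := by
  refine Submodule.Quotient.equiv _ _ (LinearEquiv.piRing R R (Fin q) R) ?_
  have : Submodule.map (LinearEquiv.piRing R R (Fin q) R : Module.Dual R (Fin q → R) →ₗ[R] (Fin q → R)) (LinearMap.range ((Matrix.toLin' A).dualMap))
      = LinearMap.range ((LinearEquiv.piRing R R (Fin q) R).toLinearMap.comp ((Matrix.toLin' A).dualMap)) := by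
    rw [LinearMap.range_comp]
  rw [this]
  have h : (LinearEquiv.piRing R R (Fin q) R).toLinearMap.comp ((Matrix.toLin' A).dualMap)
      = (Matrix.toLin' A.transpose).comp (LinearEquiv.piRing R R (Fin p) R).toLinearMap := by
    apply LinearMap.ext; intro φ
    exact piRing_dualMap p q A φ
  rw [h, LinearMap.range_comp, LinearEquiv.range, Submodule.map_top]

end Transpose

section Main

variable {R} [IsNoetherianRing R]

lemma pcore (hsd : SDProperty R) (i : ℕ) (X : Type u) [AddCommGroup X] [Module R X]
    [Module.Finite R X] [Module.IsReflexive R X]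
    (hdual : ExtVanishes R (X →ₗ[R] R) R 1) : ExtVanishes R X R (i + 1) := by
  induction i generalizing X with
  | zero => exact base_case hsd X hdual
  | succ j IH =>
      exact step_case hsd X hdual j
        (fun Y _ _ hfin hrefl hd => by
          haveI := hfin; haveI := hrefl
          exact IH Y hd)

/-- A f.g. reflexive module with `Ext^1` of its dual vanishing is totally reflexive. -/
lemma totally_of (hsd : SDProperty R) (M : Type u) [AddCommGroup M] [Module R M]
    [Module.Finite R M] (hrefl : Module.IsReflexive R M)
    (hdual : ExtVanishes R (M →ₗ[R] R) R 1) : IsTotallyReflexive R M := by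
  haveI := hrefl
  haveI : Module.Finite R (Module.Dual R M) := finite_dual M
  refine ⟨hrefl, ?_, ?_⟩
  · intro i hi
    obtain ⟨j, rfl⟩ : ∃ j, i = j + 1 := ⟨i - 1, by omega⟩
    exact pcore hsd j M hdual
  · intro i hi
    obtain ⟨j, rfl⟩ : ∃ j, i = j + 1 := ⟨i - 1, by omega⟩
    have hDD : ExtVanishes R ((Module.Dual R M) →ₗ[R] R) R 1 :=
      (extVanishes_congr (Module.evalEquiv R M) 1).1 (pcore hsd 0 M hdual)
    exact pcore hsd j (Module.Dual R M) hDD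

theorem main_thm (hsd : SDProperty R)
    (M : Type u) [AddCommGroup M] [Module R M] [Module.Finite R M] :
    IsNTorsionfree R 3 M ↔ IsTotallyReflexive R M := by
  constructor
  · rintro ⟨p, q, A, ⟨e⟩, hext⟩
    haveI : Module.Finite R (M0 p q A) := Module.Finite.of_surjective _ (pi0_surj p q A)
    haveI : Module.Finite R (Module.Dual R (M0 p q A)) := finite_dual _
    set H : FRes R (Module.Dual R (M0 p q A)) := freeRes _ with hH
    have hconv : ∀ i, 1 ≤ i → i ≤ 3 → ExtVanishes R (T0 p q A) R i := fun i h1 h3 =>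
      (extVanishes_congr (transposeEquiv p q A).symm i).1 (hext i h1 h3)
    have h1 := (extVanishes_T0_one_iff p q A H).1 (hconv 1 (by norm_num) (by norm_num))
    have h2 := (extVanishes_T0_two_iff p q A H).1 (hconv 2 (by norm_num) (by norm_num))
    have h3 := (extVanishes_T0_succ_iff p q A H 0).1 (hconv 3 (by norm_num) (by norm_num))
    have hrefl0 : Module.IsReflexive R (M0 p q A) := ⟨⟨h1, h2⟩⟩
    have hrefl : Module.IsReflexive R M := Module.equiv e.symm
    haveI := hrefl
    have hdual : ExtVanishes R (M →ₗ[R] R) R 1 :=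
      (extVanishes_congr (e.dualMap : Module.Dual R (M0 p q A) ≃ₗ[R] Module.Dual R M) 1).1 h3
    exact totally_of hsd M hrefl hdual
  · rintro ⟨hrefl, hM, hDM⟩
    haveI := hrefl
    obtain ⟨k, f, hf⟩ := Module.Finite.exists_fin' R M
    set K : Submodule R (Fin k → R) := LinearMap.ker f with hKdef
    haveI : Module.Finite R K := Module.Finite.iff_fg.2 (IsNoetherian.noetherian K)
    obtain ⟨k', c, hc⟩ := Module.Finite.exists_fin' R K
    set g : (Fin k' → R) →ₗ[R] (Fin k → R) := K.subtype.comp c with hg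
    set A : Matrix (Fin k) (Fin k') R := LinearMap.toMatrix' g with hA
    have hrangeg : LinearMap.range (Matrix.toLin' A) = K := by
      rw [hA, Matrix.toLin'_toMatrix', hg, LinearMap.range_comp,
        LinearMap.range_eq_top.2 hc, Submodule.map_top, Submodule.range_subtype]
    have e : M ≃ₗ[R] M0 k k' A :=
      ((LinearMap.quotKerEquivOfSurjective f hf).symm.trans
        (Submodule.quotEquivOfEq _ _ (by rw [hrangeg])))
    haveI : Module.Finite R (M0 k k' A) := Module.Finite.of_surjective _ (pi0_surj k k' A)
    haveI : Module.Finite R (Module.Dual R (M0 k k' A)) := finite_dual _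
    haveI hrefl0 : Module.IsReflexive R (M0 k k' A) := Module.equiv e
    set H : FRes R (Module.Dual R (M0 k k' A)) := freeRes _ with hH
    refine ⟨k, k', A, ⟨e⟩, fun i h1 h3 => ?_⟩
    have hT : ExtVanishes R (T0 k k' A) R i → ExtVanishes R
        ((Fin k' → R) ⧸ LinearMap.range (Matrix.toLin' A.transpose)) R i :=
      fun h => (extVanishes_congr (transposeEquiv k k' A) i).1 h
    interval_cases i
    · exact hT ((extVanishes_T0_one_iff k k' A H).2 (Module.bijective_dual_eval R _).1)
    · exact hT ((extVanishes_T0_two_iff k k' A H).2 (Module.bijective_dual_eval R _).2)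
    · refine hT ((extVanishes_T0_succ_iff k k' A H 0).2 ?_)
      have : ExtVanishes R (M →ₗ[R] R) R 1 := hDM 1 (by norm_num)
      exact (extVanishes_congr (e.symm.dualMap : Module.Dual R M ≃ₗ[R]
        Module.Dual R (M0 k k' A)) 1).1 this

end Main

/-- Over a commutative Noetherian ring with property (sd), a finitely generated module
is 3-torsionfree iff it is totally reflexive. -/
theorem threeTorsionfree_iff_totallyReflexive_of_sd
    (R : Type u) [CommRing R] [IsNoetherianRing R] (hsd : SDProperty R)
    (M : Type u) [AddCommGroup M] [Module R M] [Module.Finite R M] :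
    IsNTorsionfree R 3 M ↔ IsTotallyReflexive R M := main_thm hsd M
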